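/- Let P be a complete lattice such that (P, σ(P)) is not core-compact, and let L be the complete lattice P × σ(P) (product order, with σ(P) the lattice of Scott open subsets of P ordered by inclusion). Then L is not jointly Scott continuous, i.e., the supremum map (x, y) ↦ x ∨ y from (L, σ(L)) × (L, σ(L)) (product topology) to (L, σ(L)) is not continuous; consequently the Scott topology on L × L is strictly finer than the product of the Scott topologies: Σ(L × L) ≠ ΣL × ΣL. -/

import Mathlib

open Topology TopologicalSpace Set

/-- `x` is way-below `y`: for every directed set `d` having a least upper bound `a`,
if `y ≤ a` then some element of `d` dominates `x`. -/
def WayBelow {α : Type*} [Preorder α] (x y : α) : Prop :=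
  ∀ d : Set α, d.Nonempty → DirectedOn (· ≤ ·) d → ∀ a : α, IsLUB d a → y ≤ a → ∃ z ∈ d, x ≤ z

/-- A poset is continuous if for every `x` the set of elements way-below `x` is directed
(in particular nonempty) with least upper bound `x`. -/
def ContinuousPoset (α : Type*) [Preorder α] : Prop :=
  ∀ x : α, {d : α | WayBelow d x}.Nonempty ∧ DirectedOn (· ≤ ·) {d : α | WayBelow d x} ∧
    IsLUB {d : α | WayBelow d x} x

/-- A topological space is core-compact if its lattice of open subsets is a continuous
lattice. -/
def CoreCompact (X : Type*) [TopologicalSpace X] : Prop :=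
  ContinuousPoset (TopologicalSpace.Opens X)

section Aux
variable {P : Type*} [CompleteLattice P] [TopologicalSpace P] [Topology.IsScott P Set.univ]

lemma isLUB_image_mk_bot {α β : Type*} [Preorder α] [Preorder β] [OrderBot β]
    {e : Set α} {a : α} (h : IsLUB e a) (he : e.Nonempty) :
    IsLUB ((fun y => (y, (⊥ : β))) '' e) (a, ⊥) := by
  constructor
  · rintro _ ⟨y, hy, rfl⟩
    exact Prod.mk_le_mk.mpr ⟨h.1 hy, le_rfl⟩
  · intro b hb
    refine Prod.mk_le_mk.mpr ⟨h.2 fun y hy => (hb ⟨y, hy, rfl⟩).1, ?_⟩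
    obtain ⟨y, hy⟩ := he
    exact le_trans bot_le (hb ⟨y, hy, rfl⟩).2

lemma isLUB_image_bot_mk {α β : Type*} [Preorder α] [Preorder β] [OrderBot α]
    {e : Set β} {a : β} (h : IsLUB e a) (he : e.Nonempty) :
    IsLUB ((fun y => ((⊥ : α), y)) '' e) (⊥, a) := by
  constructor
  · rintro _ ⟨y, hy, rfl⟩
    exact Prod.mk_le_mk.mpr ⟨le_rfl, h.1 hy⟩
  · intro b hb
    obtain ⟨y, hy⟩ := he
    exact Prod.mk_le_mk.mpr ⟨le_trans bot_le (hb ⟨y, hy, rfl⟩).1,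
      h.2 fun y hy => (hb ⟨y, hy, rfl⟩).2⟩

lemma sup_scottContinuous {α : Type*} [SemilatticeSup α] :
    ScottContinuous (fun q : α × α => q.1 ⊔ q.2) := by
  intro d hne hdir a hlub
  constructor
  · rintro _ ⟨p, hp, rfl⟩
    exact sup_le_sup (hlub.1 hp).1 (hlub.1 hp).2
  · intro b hb
    have hub : (b, b) ∈ upperBounds d := by
      intro p hp
      have : p.1 ⊔ p.2 ≤ b := hb ⟨p, hp, rfl⟩
      exact Prod.mk_le_mk.mpr ⟨le_trans le_sup_left this, le_trans le_sup_right this⟩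
    have := hlub.2 hub
    exact sup_le this.1 this.2

/-- The membership set is Scott open in `L = P × Opens P`. -/
lemma isOpen_graph :
    IsOpen[Topology.scott (P × Opens P) Set.univ] {p : P × Opens P | p.1 ∈ p.2} := by
  letI tL : TopologicalSpace (P × Opens P) := Topology.scott (P × Opens P) Set.univ
  haveI : Topology.IsScott (P × Opens P) Set.univ := ⟨rfl⟩
  rw [Topology.IsScott.isOpen_iff_isUpperSet_and_dirSupInaccOn (D := Set.univ)]
  constructor
  · rintro p q hpq hp
    have h1 : p.1 ∈ q.2 := hpq.2 hp
    exact (Topology.IsScott.isUpperSet_of_isOpen (D := Set.univ) q.2.isOpen) hpq.1 h1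
  · rintro d - hne hdir a hlub ha
    have h1 : IsLUB (Prod.fst '' d) a.1 ∧ IsLUB (Prod.snd '' d) a.2 := (isLUB_prod (p := a)).mp hlub
    have hsnd : a.2 = sSup (Prod.snd '' d) := (h1.2.sSup_eq).symm
    have ha2 : a.1 ∈ sSup (Prod.snd '' d) := by rw [← hsnd]; exact ha
    obtain ⟨U, ⟨q, hq, rfl⟩, hxU⟩ := Opens.mem_sSup.mp ha2
    -- q.2 is Scott open in P; a.1 is lub of directed fst '' d and lies in q.2
    have hq2 := (Topology.IsScott.isOpen_iff_isUpperSet_and_dirSupInaccOn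
      (D := Set.univ)).mp (q.2.isOpen)
    have hfdir : DirectedOn (· ≤ ·) (Prod.fst '' d) :=
      directedOn_image.mpr (hdir.mono fun _ _ h => h.1)
    obtain ⟨_, ⟨⟨r, hr, rfl⟩, hrq⟩⟩ :=
      hq2.2 trivial (hne.image _) hfdir h1.1 hxU
    obtain ⟨s, hs, hrs, hqs⟩ := hdir r hr q hq
    refine ⟨s, hs, ?_⟩
    have : s.1 ∈ q.2 := hq2.1 hrs.1 hrq
    exact hqs.2 this

/-- Continuity of sup implies core-compactness. -/
lemma coreCompact_of_continuous
    (hc : @Continuous ((P × Opens P) × (P × Opens P)) (P × Opens P)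
        (@instTopologicalSpaceProd _ _
          (Topology.scott (P × Opens P) Set.univ)
          (Topology.scott (P × Opens P) Set.univ))
        (Topology.scott (P × Opens P) Set.univ)
        (fun q => q.1 ⊔ q.2)) : CoreCompact P := by
  letI tL : TopologicalSpace (P × Opens P) := Topology.scott (P × Opens P) Set.univ
  haveI : Topology.IsScott (P × Opens P) Set.univ := ⟨rfl⟩
  intro U
  have key : ∀ x ∈ U, ∃ V : Opens P, x ∈ V ∧ WayBelow V U := by
    intro x hx
    have hV : IsOpen ((fun q : (P × Opens P) × (P × Opens P) => q.1 ⊔ q.2) ⁻¹'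
        {p : P × Opens P | p.1 ∈ p.2}) := hc.isOpen_preimage _ isOpen_graph
    have hpt : ((x, (⊥ : Opens P)), ((⊥ : P), U)) ∈
        ((fun q : (P × Opens P) × (P × Opens P) => q.1 ⊔ q.2) ⁻¹'
          {p : P × Opens P | p.1 ∈ p.2}) := by
      simp only [Set.mem_preimage, Set.mem_setOf_eq, Prod.fst_sup, Prod.snd_sup]
      simpa using hx
    obtain ⟨u, v, hu, hv, hmu, hmv, huv⟩ := isOpen_prod_iff.mp hV _ _ hpt
    have hu' := (Topology.IsScott.isOpen_iff_isUpperSet_and_dirSupInaccOn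
      (D := Set.univ)).mp hu
    have hv' := (Topology.IsScott.isOpen_iff_isUpperSet_and_dirSupInaccOn
      (D := Set.univ)).mp hv
    -- V := slice of u
    have hVopen : IsOpen {y : P | (y, (⊥ : Opens P)) ∈ u} := by
      rw [Topology.IsScott.isOpen_iff_isUpperSet_and_dirSupInaccOn (D := Set.univ)]
      constructor
      · intro y z hyz hy
        exact hu'.1 (Prod.mk_le_mk.mpr ⟨hyz, le_rfl⟩) hy
      · rintro e - hne hdir a hlub ha
        obtain ⟨_, ⟨⟨y, hy, rfl⟩, hyu⟩⟩ := hu'.2 trivial (hne.image _)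
          (directedOn_image.mpr (hdir.mono fun _ _ h => Prod.mk_le_mk.mpr ⟨h, le_rfl⟩))
          (isLUB_image_mk_bot hlub hne) ha
        exact ⟨y, hy, hyu⟩
    refine ⟨⟨_, hVopen⟩, hmu, ?_⟩
    intro D hDne hDdir A hA hUA
    have hbA : ((⊥ : P), A) ∈ v := hv'.1 (Prod.mk_le_mk.mpr ⟨le_rfl, hUA⟩) hmv
    obtain ⟨_, ⟨⟨W, hW, rfl⟩, hWv⟩⟩ := hv'.2 trivial (hDne.image _)
      (directedOn_image.mpr (hDdir.mono fun _ _ h => Prod.mk_le_mk.mpr ⟨le_rfl, h⟩))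
      (isLUB_image_bot_mk hA hDne) hbA
    refine ⟨W, hW, ?_⟩
    intro y hy
    have : ((y, (⊥ : Opens P)), ((⊥ : P), W)) ∈ u ×ˢ v := ⟨hy, hWv⟩
    have := huv this
    simp only [Set.mem_preimage, Set.mem_setOf_eq, Prod.fst_sup, Prod.snd_sup] at this
    simpa using this
  refine ⟨?_, ?_, ?_, ?_⟩
  · -- nonempty: ⊥ is way below U
    refine ⟨⊥, fun d hne hdir a hlub hUa => ?_⟩
    obtain ⟨z, hz⟩ := hne
    exact ⟨z, hz, bot_le⟩
  · -- directed
    intro V₁ h₁ V₂ h₂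
    refine ⟨V₁ ⊔ V₂, ?_, le_sup_left, le_sup_right⟩
    intro d hne hdir a hlub hUa
    obtain ⟨z₁, hz₁, hVz₁⟩ := h₁ d hne hdir a hlub hUa
    obtain ⟨z₂, hz₂, hVz₂⟩ := h₂ d hne hdir a hlub hUa
    obtain ⟨z, hz, h₁z, h₂z⟩ := hdir z₁ hz₁ z₂ hz₂
    exact ⟨z, hz, sup_le (hVz₁.trans h₁z) (hVz₂.trans h₂z)⟩
  · -- U is an upper bound
    intro V hV
    obtain ⟨z, hz, hVz⟩ := hV {U} ⟨U, rfl⟩ (directedOn_singleton U)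
      U isLUB_singleton le_rfl
    rwa [Set.mem_singleton_iff.mp hz] at hVz
  · -- least upper bound
    intro b hb
    intro x hxU
    obtain ⟨V, hxV, hVU⟩ := key x hxU
    exact hb hVU hxV

end Aux

/-- Let `P` be a complete lattice such that `(P, σ(P))` is not core-compact, and let
`L = P × σ(P)` be the product of `P` with its lattice of Scott open sets. Then the supremum
map `(x, y) ↦ x ⊔ y : ΣL × ΣL → ΣL` is not continuous (i.e. `L` is not jointly Scott
continuous); consequently the Scott topology on `L × L` differs from the product of the Scott
topologies. -/
theorem not_jointly_scottContinuous_of_not_coreCompact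
    {P : Type*} [CompleteLattice P] [TopologicalSpace P] [Topology.IsScott P Set.univ]
    (h : ¬ CoreCompact P) :
    (¬ @Continuous ((P × TopologicalSpace.Opens P) × (P × TopologicalSpace.Opens P))
        (P × TopologicalSpace.Opens P)
        (@instTopologicalSpaceProd _ _
          (Topology.scott (P × TopologicalSpace.Opens P) Set.univ)
          (Topology.scott (P × TopologicalSpace.Opens P) Set.univ))
        (Topology.scott (P × TopologicalSpace.Opens P) Set.univ)
        (fun q => q.1 ⊔ q.2)) ∧
    Topology.scott ((P × TopologicalSpace.Opens P) × (P × TopologicalSpace.Opens P)) Set.univ ≠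
      @instTopologicalSpaceProd _ _
        (Topology.scott (P × TopologicalSpace.Opens P) Set.univ)
        (Topology.scott (P × TopologicalSpace.Opens P) Set.univ) := by
  have part1 : ¬ @Continuous ((P × Opens P) × (P × Opens P)) (P × Opens P)
      (@instTopologicalSpaceProd _ _
        (Topology.scott (P × Opens P) Set.univ)
        (Topology.scott (P × Opens P) Set.univ))
      (Topology.scott (P × Opens P) Set.univ)
      (fun q => q.1 ⊔ q.2) := fun hc => h (coreCompact_of_continuous hc)
  refine ⟨part1, fun heq => part1 ?_⟩
  have hsc : @Continuous ((P × Opens P) × (P × Opens P)) (P × Opens P)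
      (Topology.scott ((P × Opens P) × (P × Opens P)) Set.univ)
      (Topology.scott (P × Opens P) Set.univ)
      (fun q => q.1 ⊔ q.2) := by
    letI tL : TopologicalSpace (P × Opens P) := Topology.scott (P × Opens P) Set.univ
    letI tLL : TopologicalSpace ((P × Opens P) × (P × Opens P)) :=
      Topology.scott ((P × Opens P) × (P × Opens P)) Set.univ
    haveI : Topology.IsScott (P × Opens P) Set.univ := ⟨rfl⟩
    haveI : Topology.IsScott ((P × Opens P) × (P × Opens P)) Set.univ := ⟨rfl⟩
    exact (Topology.IsScott.scottContinuousOn_iff_continuous (fun _ _ _ => Set.mem_univ _)).mp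
      (scottContinuousOn_univ.mpr sup_scottContinuous)
  exact heq ▸ hsc
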